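/- Let $p$ be prime, $n \ge 2$, $1 \le k \le n/2$, and $\sigma$ a ring automorphism of order dividing $p^n$ of a ring $R$ with $x \in R$ satisfying $\sum_{i=0}^{p^{n-k}-1}\sigma^{ip^k}(x) = 1$. Define $\psi : \{0, 1, \dots, p^n - 1\} \to R$ by $\psi(0) = 0$ and $\psi(i) = \psi(i-1) - \varepsilon(i-1) + p^{n-2k}\sigma^{i-1}(x)$, where $\varepsilon(j) = 1$ if $p^k \mid j$ and $0$ otherwise. Then for every $i$ with $0 \le i < p^n - p^k$, the difference $\psi(i + p^k) - \psi(i)$ equals $\sigma^i(z)$, where $z = p^{n-2k}\big(\sum_{j=0}^{p^k-1}\sigma^j\big)(x) - 1$. -/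

import Mathlib

private lemma dvd_offset_iff (m i t : ℕ) (hm : 0 < m) (ht : t < m) :
    m ∣ (i + t) ↔ t = (m - i % m) % m := by
  have h1 : m ∣ i + t ↔ (i % m + t) % m = 0 := by
    rw [Nat.dvd_iff_mod_eq_zero, Nat.add_mod, Nat.mod_eq_of_lt ht]
  have hr : i % m < m := Nat.mod_lt _ hm
  rcases Nat.eq_zero_or_pos (i % m) with h0 | h0
  · rw [h1, h0, zero_add, Nat.mod_eq_of_lt ht, Nat.sub_zero, Nat.mod_self]
  · have e2 : (m - i % m) % m = m - i % m := Nat.mod_eq_of_lt (by omega)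
    rw [h1, e2]
    by_cases hlt : i % m + t < m
    · rw [Nat.mod_eq_of_lt hlt]; omega
    · rw [Nat.mod_eq_sub_mod (by omega), Nat.mod_eq_of_lt (by omega)]; omega

private lemma indicator_sum (R : Type*) [Ring R] (m i : ℕ) (hm : 0 < m) :
    ∑ t ∈ Finset.range m, (if m ∣ (i + t) then (1 : R) else 0) = 1 := by
  have : ∀ t ∈ Finset.range m,
      (if m ∣ (i + t) then (1 : R) else 0) = (if t = (m - i % m) % m then (1 : R) else 0) := by
    intro t ht
    rw [Finset.mem_range] at ht
    simp [dvd_offset_iff m i t hm ht]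
  rw [Finset.sum_congr rfl this, Finset.sum_ite_eq' (Finset.range m)]
  simp [Nat.mod_lt _ hm]

theorem psi_difference (R : Type*) [Ring R] (p n k : ℕ) (hp : p.Prime)
    (hn : 2 ≤ n) (hk : 1 ≤ k) (hkn : 2 * k ≤ n)
    (σ : R ≃+* R) (hσ : σ ^ (p ^ n) = 1)
    (x : R) (hx : ∑ i ∈ Finset.range (p ^ (n - k)), (σ ^ (i * p ^ k)) x = 1)
    (ψ : ℕ → R) (hψ0 : ψ 0 = 0)
    (hψ : ∀ i, 1 ≤ i → i ≤ p ^ n - 1 →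
      ψ i = ψ (i - 1) - (if p ^ k ∣ (i - 1) then 1 else 0)
        + (p : R) ^ (n - 2 * k) * (σ ^ (i - 1)) x)
    (z : R) (hz : z = (p : R) ^ (n - 2 * k) * (∑ j ∈ Finset.range (p ^ k), (σ ^ j) x) - 1) :
    ∀ i, i < p ^ n - p ^ k → ψ (i + p ^ k) - ψ i = (σ ^ i) z := by
  intro i hi
  have hm : 0 < p ^ k := Nat.pow_pos hp.pos
  have hkn' : p ^ k ≤ p ^ n := Nat.pow_le_pow_right hp.pos (by omega)
  have hpn : 0 < p ^ n := Nat.pow_pos hp.pos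
  have step : ∀ t, t < p ^ k → ψ (i + t + 1) - ψ (i + t)
      = (p : R) ^ (n - 2 * k) * (σ ^ (i + t)) x - (if p ^ k ∣ (i + t) then 1 else 0) := by
    intro t ht
    have h := hψ (i + t + 1) (by omega) (by omega)
    simp only [Nat.add_sub_cancel] at h
    rw [h]; abel
  have tel : ψ (i + p ^ k) - ψ i
      = ∑ t ∈ Finset.range (p ^ k), (ψ (i + t + 1) - ψ (i + t)) := by
    exact (Finset.sum_range_sub (fun t => ψ (i + t)) (p ^ k)).symm
  rw [tel, Finset.sum_congr rfl (fun t ht => step t (Finset.mem_range.mp ht)),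
    Finset.sum_sub_distrib, indicator_sum, hz]
  · rw [map_sub, map_one, map_mul, map_pow, map_natCast, map_sum, Finset.mul_sum]
    congr 1
    refine Finset.sum_congr rfl (fun j hj => ?_)
    congr 1
    rw [pow_add]
    rfl
  · exact hm
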